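/- The VBOS objective V(π) = Σ_x π_x (μ_x + σ_x sqrt(−2 ln π_x)), viewed as a function of π ∈ (0,1)^{|X|}, is concave, and strictly concave if σ_x > 0 for all x. -/

import Mathlib

open Finset in
/-- The VBOS objective `V(π) = Σ_x π_x (μ_x + σ_x sqrt(−2 ln π_x))`. -/
noncomputable def vbos {X : Type*} [Fintype X] (μ σ : X → ℝ) (p : X → ℝ) : ℝ :=
  ∑ x, p x * (μ x + σ x * Real.sqrt (-2 * Real.log (p x)))

noncomputable def vbosS (t : ℝ) : ℝ := Real.sqrt (-2 * Real.log t)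

noncomputable def vbosG (t : ℝ) : ℝ := t * vbosS t

noncomputable def vbosG' (t : ℝ) : ℝ := vbosS t - 1 / vbosS t

lemma vbos_arg_pos {t : ℝ} (ht : t ∈ Set.Ioo (0 : ℝ) 1) : 0 < -2 * Real.log t := by
  have := Real.log_neg ht.1 ht.2
  linarith

lemma vbosS_pos {t : ℝ} (ht : t ∈ Set.Ioo (0 : ℝ) 1) : 0 < vbosS t :=
  Real.sqrt_pos.2 (vbos_arg_pos ht)

lemma hasDerivAt_vbosS {t : ℝ} (ht : t ∈ Set.Ioo (0 : ℝ) 1) :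
    HasDerivAt vbosS (-(1 / (t * vbosS t))) t := by
  have h2 : HasDerivAt (fun t => -2 * Real.log t) (-2 * t⁻¹) t :=
    (Real.hasDerivAt_log ht.1.ne').const_mul (-2)
  have h3 : HasDerivAt Real.sqrt (1 / (2 * Real.sqrt (-2 * Real.log t))) (-2 * Real.log t) :=
    Real.hasDerivAt_sqrt (vbos_arg_pos ht).ne'
  have := h3.comp t h2
  refine this.congr_deriv ?_
  have hS := vbosS_pos ht
  have ht0 := ht.1
  unfold vbosS at *
  field_simp

lemma hasDerivAt_vbosG {t : ℝ} (ht : t ∈ Set.Ioo (0 : ℝ) 1) :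
    HasDerivAt vbosG (vbosG' t) t := by
  have := (hasDerivAt_id t).mul (hasDerivAt_vbosS ht)
  refine this.congr_deriv ?_
  have hS := vbosS_pos ht
  have ht0 := ht.1
  unfold vbosG'
  field_simp
  simp only [id]
  ring

lemma hasDerivAt_vbosG' {t : ℝ} (ht : t ∈ Set.Ioo (0 : ℝ) 1) :
    HasDerivAt vbosG' (-(1 / (t * vbosS t)) * (1 + 1 / (vbosS t) ^ 2)) t := by
  have hS := vbosS_pos ht
  have h1 := hasDerivAt_vbosS ht
  have h2 : HasDerivAt (fun u => 1 / vbosS u)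
      (-(-(1 / (t * vbosS t))) / (vbosS t) ^ 2) t := by
    have h := h1.inv hS.ne'
    simp only [one_div, neg_neg] at h ⊢
    exact h
  have := h1.sub h2
  refine this.congr_deriv ?_
  have ht0 := ht.1
  field_simp
  ring

lemma vbosG_strictConcave : StrictConcaveOn ℝ (Set.Ioo (0 : ℝ) 1) vbosG := by
  apply strictConcaveOn_of_deriv2_neg (convex_Ioo 0 1)
  · exact fun t ht => (hasDerivAt_vbosG ht).continuousAt.continuousWithinAt
  · intro t ht
    rw [interior_Ioo] at ht
    have hderiv : deriv (deriv vbosG) t = -(1 / (t * vbosS t)) * (1 + 1 / (vbosS t) ^ 2) := by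
      have heq : Set.EqOn (deriv vbosG) vbosG' (Set.Ioo (0 : ℝ) 1) :=
        fun u hu => (hasDerivAt_vbosG hu).deriv
      have : deriv vbosG =ᶠ[nhds t] vbosG' :=
        Filter.eventuallyEq_of_mem (isOpen_Ioo.mem_nhds ht) heq
      rw [this.deriv_eq]
      exact (hasDerivAt_vbosG' ht).deriv
    simp only [Function.iterate_succ, Function.iterate_zero, Function.comp_apply, id]
    rw [hderiv]
    have hS := vbosS_pos ht
    have ht0 := ht.1
    have h1 : 0 < 1 / (t * vbosS t) := by positivity
    have h2 : 0 < 1 + 1 / (vbosS t) ^ 2 := by positivity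
    nlinarith

lemma vbos_term_le {μx σx : ℝ} (hσ : 0 ≤ σx) {px qx a b : ℝ}
    (hpx : px ∈ Set.Ioo (0 : ℝ) 1) (hqx : qx ∈ Set.Ioo (0 : ℝ) 1)
    (ha : 0 ≤ a) (hb : 0 ≤ b) (hab : a + b = 1) :
    a * (px * (μx + σx * Real.sqrt (-2 * Real.log px))) +
      b * (qx * (μx + σx * Real.sqrt (-2 * Real.log qx))) ≤
    (a * px + b * qx) * (μx + σx * Real.sqrt (-2 * Real.log (a * px + b * qx))) := by
  have hg := vbosG_strictConcave.concaveOn.2 hpx hqx ha hb hab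
  simp only [smul_eq_mul, vbosG, vbosS] at hg
  nlinarith [mul_le_mul_of_nonneg_left hg hσ]

lemma vbos_term_lt {μx σx : ℝ} (hσ : 0 < σx) {px qx a b : ℝ}
    (hpx : px ∈ Set.Ioo (0 : ℝ) 1) (hqx : qx ∈ Set.Ioo (0 : ℝ) 1)
    (hne : px ≠ qx) (ha : 0 < a) (hb : 0 < b) (hab : a + b = 1) :
    a * (px * (μx + σx * Real.sqrt (-2 * Real.log px))) +
      b * (qx * (μx + σx * Real.sqrt (-2 * Real.log qx))) <
    (a * px + b * qx) * (μx + σx * Real.sqrt (-2 * Real.log (a * px + b * qx))) := by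
  have hg := vbosG_strictConcave.2 hpx hqx hne ha hb hab
  simp only [smul_eq_mul, vbosG, vbosS] at hg
  nlinarith [mul_lt_mul_of_pos_left hg hσ]

/-- The VBOS objective, viewed as a function of `π ∈ (0,1)^{|X|}`, is concave,
and strictly concave if `σ_x > 0` for all `x`. -/
theorem stmt_5 {X : Type*} [Fintype X] (μ σ : X → ℝ) (hσ : ∀ x, 0 ≤ σ x) :
    ConcaveOn ℝ {p : X → ℝ | ∀ x, p x ∈ Set.Ioo (0 : ℝ) 1} (vbos μ σ) ∧
      ((∀ x, 0 < σ x) →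
        StrictConcaveOn ℝ {p : X → ℝ | ∀ x, p x ∈ Set.Ioo (0 : ℝ) 1} (vbos μ σ)) := by
  have hset : Convex ℝ {p : X → ℝ | ∀ x, p x ∈ Set.Ioo (0 : ℝ) 1} := by
    have h : {p : X → ℝ | ∀ x, p x ∈ Set.Ioo (0 : ℝ) 1} =
        Set.univ.pi (fun _ : X => Set.Ioo (0 : ℝ) 1) := by
      ext p; simp [Set.mem_pi]
    rw [h]
    exact convex_pi fun _ _ => convex_Ioo 0 1
  constructor
  · refine ⟨hset, fun p hp q hq a b ha hb hab => ?_⟩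
    simp only [smul_eq_mul, vbos, Finset.mul_sum, ← Finset.sum_add_distrib]
    refine Finset.sum_le_sum fun x _ => ?_
    simpa [Pi.add_apply, Pi.smul_apply, smul_eq_mul] using
      vbos_term_le (hσ x) (hp x) (hq x) ha hb hab
  · intro hσ'
    refine ⟨hset, fun p hp q hq hne a b ha hb hab => ?_⟩
    simp only [smul_eq_mul, vbos, Finset.mul_sum, ← Finset.sum_add_distrib]
    obtain ⟨x0, hx0⟩ := Function.ne_iff.mp hne
    refine Finset.sum_lt_sum (fun x _ => ?_) ⟨x0, Finset.mem_univ x0, ?_⟩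
    · simpa [Pi.add_apply, Pi.smul_apply, smul_eq_mul] using
        vbos_term_le (hσ x) (hp x) (hq x) ha.le hb.le hab
    · simpa [Pi.add_apply, Pi.smul_apply, smul_eq_mul] using
        vbos_term_lt (hσ' x0) (hp x0) (hq x0) hx0 ha hb hab
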